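/- Let f : ℝⁿ → ℝⁿ be continuously differentiable and admit a global flow φ. Let g : ℝⁿ → ℝ be a continuous function with g(x) ≥ 0 for all x, and suppose there exists a continuously differentiable function V : ℝⁿ → ℝ such that f(x) · ∇V(x) ≥ g(x) for all x ∈ ℝⁿ. Then g(y) = 0 for every limit point y of the system, i.e. for every x₀ ∈ ℝⁿ and every y ∈ ω(x₀, φ). -/

import Mathlib

set_option maxHeartbeats 1000000


open Filter Topology

/-- If `V` is a C¹ auxiliary function with `f(x) · ∇V(x) ≥ g(x)` everywhere,
where `g` is continuous and nonnegative, then `g` vanishes at every ω-limit point of the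
global flow `φ` of the C¹ vector field `f`. -/
theorem gradient_like_aux_function_vanishes_on_limit_set
    (n : ℕ)
    (f : EuclideanSpace ℝ (Fin n) → EuclideanSpace ℝ (Fin n))
    (hf : ContDiff ℝ 1 f)
    (φ : EuclideanSpace ℝ (Fin n) → ℝ → EuclideanSpace ℝ (Fin n))
    (hφ : ContDiff ℝ 1 (fun p : EuclideanSpace ℝ (Fin n) × ℝ => φ p.1 p.2))
    (hφ0 : ∀ x, φ x 0 = x)
    (hφ' : ∀ x t, HasDerivAt (φ x) (f (φ x t)) t)
    (g : EuclideanSpace ℝ (Fin n) → ℝ)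
    (hg : Continuous g) (hg0 : ∀ x, 0 ≤ g x)
    (V : EuclideanSpace ℝ (Fin n) → ℝ)
    (hV : ContDiff ℝ 1 V)
    (hVg : ∀ x, g x ≤ fderiv ℝ V x (f x))
    (x₀ y : EuclideanSpace ℝ (Fin n))
    (hy : ∃ ts : ℕ → ℝ, Tendsto ts atTop atTop ∧
      Tendsto (fun k => φ x₀ (ts k)) atTop (𝓝 y)) :
    g y = 0 := by
  by_contra hne
  obtain ⟨ts, hts, hconv⟩ := hy
  set ψ : ℝ → EuclideanSpace ℝ (Fin n) := φ x₀ with hψdef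
  have hψ' : ∀ t, HasDerivAt ψ (f (ψ t)) t := hφ' x₀
  have hψc : Continuous ψ := continuous_iff_continuousAt.mpr fun t => (hψ' t).continuousAt
  set h : ℝ → ℝ := fun t => V (ψ t) with hhdef
  have hh : ∀ t, HasDerivAt h (fderiv ℝ V (ψ t) (f (ψ t))) t := fun t =>
    ((hV.differentiable one_ne_zero (ψ t)).hasFDerivAt).comp_hasDerivAt t (hψ' t)
  have hderiv : ∀ t, deriv h t = fderiv ℝ V (ψ t) (f (ψ t)) := fun t => (hh t).deriv
  have hmono : Monotone h := by
    apply monotone_of_deriv_nonneg (fun t => (hh t).differentiableAt)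
    intro t
    rw [hderiv t]
    exact (hg0 _).trans (hVg _)
  set c : ℝ := g y with hcdef
  have hc : 0 < c := lt_of_le_of_ne (hg0 y) (Ne.symm hne)
  -- find a ball where g ≥ c/2
  obtain ⟨ε, hε, hεb⟩ := Metric.continuousAt_iff.mp hg.continuousAt (c / 2) (half_pos hc)
  set r : ℝ := ε / 2 with hrdef
  have hr : 0 < r := half_pos hε
  have hball : ∀ z ∈ Metric.closedBall y r, c / 2 ≤ g z := by
    intro z hz
    have hzy : dist z y < ε := lt_of_le_of_lt (Metric.mem_closedBall.mp hz) (by linarith)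
    have := hεb hzy
    rw [Real.dist_eq, abs_sub_lt_iff] at this
    linarith [this.2]
  -- bound f on the ball
  obtain ⟨C, hC⟩ := (isCompact_closedBall y r).exists_bound_of_continuousOn
    (hf.continuous.continuousOn)
  have hC0 : 0 ≤ C := le_trans (norm_nonneg _) (hC y (Metric.mem_closedBall_self hr.le))
  set M : ℝ := C + 1 with hMdef
  have hM : 0 < M := by linarith
  set δ : ℝ := r / (2 * M) with hδdef
  have hδ : 0 < δ := div_pos hr (by linarith)
  have hMδ : M * δ = r / 2 := by
    rw [hδdef]; field_simp
  -- bootstrap: flow stays in closedBall y r for time δ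
  have key : ∀ t₀, dist (ψ t₀) y < r / 2 →
      ∀ s ∈ Set.Icc t₀ (t₀ + δ), ψ s ∈ Metric.closedBall y r := by
    intro t₀ ht₀
    by_contra hcon
    push_neg at hcon
    obtain ⟨s₀, hs₀I, hs₀⟩ := hcon
    set S : Set ℝ := {s ∈ Set.Icc t₀ (t₀ + δ) | r ≤ dist (ψ s) y} with hSdef
    have hSne : S.Nonempty :=
      ⟨s₀, hs₀I, le_of_lt (by simpa [Metric.mem_closedBall, not_le] using hs₀)⟩
    have hdc : Continuous fun s => dist (ψ s) y := hψc.dist continuous_const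
    have hSclosed : IsClosed S :=
      IsClosed.inter isClosed_Icc (isClosed_le continuous_const hdc)
    have hSbdd : BddBelow S := ⟨t₀, fun s hs => hs.1.1⟩
    set s₁ : ℝ := sInf S with hs₁def
    have hs₁S : s₁ ∈ S := hSclosed.csInf_mem hSne hSbdd
    obtain ⟨hs₁I, hs₁r⟩ := hs₁S
    have ht₀s₁ : t₀ < s₁ := by
      rcases lt_or_eq_of_le hs₁I.1 with hlt | heq
      · exact hlt
      · exfalso; rw [← heq] at hs₁r; linarith
    have hlt : ∀ u ∈ Set.Ico t₀ s₁, dist (ψ u) y < r := by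
      intro u hu
      by_contra hge
      push_neg at hge
      have huS : u ∈ S := ⟨⟨hu.1, le_trans hu.2.le hs₁I.2⟩, hge⟩
      exact absurd (csInf_le hSbdd huS) (not_le.mpr hu.2)
    have hle_s₁ : dist (ψ s₁) y ≤ r := by
      have htend : Tendsto (fun u => dist (ψ u) y) (𝓝[<] s₁) (𝓝 (dist (ψ s₁) y)) :=
        (hdc.tendsto s₁).mono_left nhdsWithin_le_nhds
      refine le_of_tendsto htend ?_
      filter_upwards [Ioo_mem_nhdsLT_of_mem (Set.mem_Ioc.mpr ⟨ht₀s₁, le_rfl⟩)] with u hu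
      exact (hlt u ⟨hu.1.le, hu.2⟩).le
    have hIcc : ∀ u ∈ Set.Icc t₀ s₁, ψ u ∈ Metric.closedBall y r := by
      intro u hu
      rcases eq_or_lt_of_le hu.2 with heq | hult
      · rw [heq]; exact Metric.mem_closedBall.mpr hle_s₁
      · exact Metric.mem_closedBall.mpr (hlt u ⟨hu.1, hult⟩).le
    have hbound : ‖ψ s₁ - ψ t₀‖ ≤ M * ‖s₁ - t₀‖ := by
      refine (convex_Icc t₀ s₁).norm_image_sub_le_of_norm_hasDerivWithin_le
        (fun u hu => (hψ' u).hasDerivWithinAt) (fun u hu => ?_)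
        (Set.left_mem_Icc.mpr ht₀s₁.le) (Set.right_mem_Icc.mpr ht₀s₁.le)
      exact le_trans (hC (ψ u) (hIcc u hu)) (by linarith)
    have hnorm : ‖s₁ - t₀‖ ≤ δ := by
      rw [Real.norm_eq_abs, abs_of_nonneg (by linarith)]
      linarith [hs₁I.2]
    have hfar : dist (ψ s₁) (ψ t₀) ≤ r / 2 := by
      rw [dist_eq_norm]
      calc ‖ψ s₁ - ψ t₀‖ ≤ M * ‖s₁ - t₀‖ := hbound
        _ ≤ M * δ := by nlinarith [hM]
        _ = r / 2 := hMδ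
    have : dist (ψ s₁) y < r :=
      lt_of_le_of_lt (dist_triangle (ψ s₁) (ψ t₀) y) (by linarith)
    linarith
  -- increase of h by c/2*δ
  have hincr : ∀ t₀, dist (ψ t₀) y < r / 2 → h t₀ + c / 2 * δ ≤ h (t₀ + δ) := by
    intro t₀ ht₀
    set H : ℝ → ℝ := fun u => h u - c / 2 * u with hHdef
    have hH' : ∀ u, HasDerivAt H (fderiv ℝ V (ψ u) (f (ψ u)) - c / 2) u := fun u => by
      have := (hh u).sub ((hasDerivAt_id u).const_mul (c / 2)); rw [mul_one] at this; exact this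
    have hHc : Continuous H := continuous_iff_continuousAt.mpr fun u => (hH' u).continuousAt
    have hHmono : MonotoneOn H (Set.Icc t₀ (t₀ + δ)) := by
      apply monotoneOn_of_deriv_nonneg (convex_Icc _ _) hHc.continuousOn
      · intro u hu
        exact (hH' u).differentiableAt.differentiableWithinAt
      · intro u hu
        rw [(hH' u).deriv]
        have hu' : u ∈ Set.Icc t₀ (t₀ + δ) := interior_subset hu
        have h1 : c / 2 ≤ g (ψ u) := hball _ (key t₀ ht₀ u hu')
        linarith [hVg (ψ u)]
    have := hHmono (Set.left_mem_Icc.mpr (by linarith)) (Set.right_mem_Icc.mpr (by linarith)) (by linarith)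
    simp only [hHdef] at this
    linarith
  -- limit and upper bound
  have hhts : Tendsto (fun k => h (ts k)) atTop (𝓝 (V y)) :=
    (hV.continuous.tendsto y).comp hconv
  have hub : ∀ t, h t ≤ V y := fun t =>
    ge_of_tendsto hhts ((hts.eventually_ge_atTop t).mono fun k hk => hmono hk)
  have hnear : ∀ᶠ k in atTop, dist (ψ (ts k)) y < r / 2 :=
    Metric.tendsto_nhds.mp hconv (r / 2) (by positivity)
  have hfin : V y + c / 2 * δ ≤ V y := by
    have hlim : Tendsto (fun k => h (ts k) + c / 2 * δ) atTop (𝓝 (V y + c / 2 * δ)) :=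
      hhts.add_const _
    exact le_of_tendsto hlim (hnear.mono fun k hk => (hincr _ hk).trans (hub _))
  nlinarith [mul_pos (half_pos hc) hδ]
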